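/- Theorem 1(i) (Identification, loss-minimization part): under the stated assumptions, the randomized-experiment least-squares parameter β* also minimizes the combined-population squared loss for the augmented ANCOVA model: for every β ∈ ℝ^{k₁+2}, E_P[(Y − μ̄_aug(·;β))²] ≥ E_P[(Y − μ̄_aug(·;β*))²]. -/

import Mathlib

open MeasureTheory ProbabilityTheory
open scoped ENNReal

/-- Theorem 1(i), identification / loss-minimization part: under
randomization in the trial, the randomized-experiment least-squares parameter
`β*` (the unique minimizer of the trial squared loss for the ANCOVA working
model `μ̄(ω;β) = β_int + β_A A(ω) + β_X ⬝ p_μ(X(ω))`) also minimizes the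
combined-population squared loss for the augmented ANCOVA model
`μ̄_aug(ω;β) = μ̄(ω;β) + (1 − S(ω))·b₀(ω)`, where
`b₀ = E_{P(·|S=0)}[Y | σ(X)] − (β*_int + β*_X ⬝ p_μ(X))` is the bias function:
for every `β`, `E_P[(Y − μ̄_aug(·;β))²] ≥ E_P[(Y − μ̄_aug(·;β*))²]`. -/
lemma memLp_two_integrable_mul {Ω : Type*} {m0 : MeasurableSpace Ω} {μ : Measure Ω} {f g : Ω → ℝ}
    (hf : MemLp f 2 μ) (hg : MemLp g 2 μ) : Integrable (fun ω => f ω * g ω) μ := by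
  refine (hf.integrable_sq.add hg.integrable_sq).mono'
    (hf.aestronglyMeasurable.mul hg.aestronglyMeasurable) ?_
  filter_upwards with ω
  simp only [Real.norm_eq_abs, abs_mul, Pi.add_apply]
  nlinarith [abs_nonneg (f ω), abs_nonneg (g ω), sq_abs (f ω), sq_abs (g ω),
    sq_nonneg (|f ω| - |g ω|)]

lemma condexp_residual_sq_le {Ω : Type*} {m0 : MeasurableSpace Ω} {μ : Measure Ω}
    [IsProbabilityMeasure μ] {m : MeasurableSpace Ω} (hm : m ≤ m0)
    {Y g : Ω → ℝ} (hY : MemLp Y 2 μ) (hg : MemLp g 2 μ) (hgm : StronglyMeasurable[m] g)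
    (hI1 : Integrable (fun ω => (Y ω - (μ[Y|m]) ω) ^ 2) μ) :
    ∫ ω, (Y ω - (μ[Y|m]) ω) ^ 2 ∂μ ≤ ∫ ω, (Y ω - (μ[Y|m]) ω + g ω) ^ 2 ∂μ := by
  have hYint : Integrable Y μ := hY.integrable one_le_two
  have hgY : Integrable (g * Y) μ := memLp_two_integrable_mul hg hY
  have hpull : μ[g * Y|m] =ᵐ[μ] g * μ[Y|m] := condExp_mul_of_stronglyMeasurable_left hgm hgY hYint
  have hgCE : Integrable (g * μ[Y|m]) μ := integrable_condExp.congr hpull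
  have h0 : ∫ ω, g ω * Y ω ∂μ = ∫ ω, g ω * (μ[Y|m]) ω ∂μ := by
    calc ∫ ω, g ω * Y ω ∂μ = ∫ ω, (μ[g * Y|m]) ω ∂μ := (integral_condExp hm).symm
    _ = ∫ ω, (g * μ[Y|m]) ω ∂μ := integral_congr_ae hpull
  have hgY' : Integrable (fun ω => g ω * Y ω) μ := hgY
  have hgCE' : Integrable (fun ω => g ω * (μ[Y|m]) ω) μ := hgCE
  have hkey : ∀ ω, (Y ω - (μ[Y|m]) ω + g ω) ^ 2
      = (Y ω - (μ[Y|m]) ω) ^ 2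
        + (2 * (g ω * Y ω) - 2 * (g ω * (μ[Y|m]) ω) + g ω ^ 2) := by
    intro ω; ring
  have hrest : Integrable
      (fun ω => 2 * (g ω * Y ω) - 2 * (g ω * (μ[Y|m]) ω) + g ω ^ 2) μ :=
    ((hgY'.const_mul 2).sub (hgCE'.const_mul 2)).add hg.integrable_sq
  have hsum : ∫ ω, (Y ω - (μ[Y|m]) ω + g ω) ^ 2 ∂μ
      = ∫ ω, (Y ω - (μ[Y|m]) ω) ^ 2 ∂μ
        + ∫ ω, (2 * (g ω * Y ω) - 2 * (g ω * (μ[Y|m]) ω) + g ω ^ 2) ∂μ := by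
    simp_rw [hkey]
    exact integral_add hI1 hrest
  have i1 : Integrable (fun ω => 2 * (g ω * Y ω)) μ := hgY'.const_mul 2
  have i2 : Integrable (fun ω => 2 * (g ω * (μ[Y|m]) ω)) μ := hgCE'.const_mul 2
  have i12 : Integrable (fun ω => 2 * (g ω * Y ω) - 2 * (g ω * (μ[Y|m]) ω)) μ := i1.sub i2
  have hzero : ∫ ω, (2 * (g ω * Y ω) - 2 * (g ω * (μ[Y|m]) ω) + g ω ^ 2) ∂μ
      = ∫ ω, g ω ^ 2 ∂μ := by
    rw [integral_add i12 hg.integrable_sq, integral_sub i1 i2,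
      integral_const_mul, integral_const_mul, h0]
    ring
  rw [hsum, hzero]
  have : (0:ℝ) ≤ ∫ ω, g ω ^ 2 ∂μ := integral_nonneg fun ω => sq_nonneg _
  linarith
theorem augmented_ancova_loss_minimization
    {Ω : Type*} [MeasurableSpace Ω] (P : Measure Ω) [IsProbabilityMeasure P]
    {d k₁ : ℕ}
    -- covariates, treatment and trial indicators
    (X : Ω → Fin d → ℝ) (hX : Measurable X)
    (A S : Ω → ℝ) (hA : Measurable A) (hS : Measurable S)
    (hA01 : ∀ ω, A ω = 0 ∨ A ω = 1) (hS01 : ∀ ω, S ω = 0 ∨ S ω = 1)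
    -- potential outcomes and observed outcome
    (Y0 Y1 : Ω → ℝ) (hY0 : MemLp Y0 2 P) (hY1 : MemLp Y1 2 P)
    (Y : Ω → ℝ) (hY : ∀ ω, Y ω = A ω * Y1 ω + (1 - A ω) * Y0 ω)
    -- a nontrivial trial population
    (hS1pos : 0 < P {ω | S ω = 1}) (hS1lt : P {ω | S ω = 1} < 1)
    -- external controls are untreated
    (hEC : ∀ᵐ ω ∂P, S ω = 0 → A ω = 0)
    -- randomization: `A ⫫ (X, Y0, Y1)` under `P(·|S=1)`, and `π = P(A=1|S=1) ∈ (0,1)`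
    (hindep : IndepFun A (fun ω => (X ω, Y0 ω, Y1 ω)) (P[|{ω | S ω = 1}]))
    (hπpos : 0 < (P[|{ω | S ω = 1}]) {ω | A ω = 1})
    (hπlt : (P[|{ω | S ω = 1}]) {ω | A ω = 1} < 1)
    -- working-model basis functions
    (pμ : (Fin d → ℝ) → Fin k₁ → ℝ) (hpμ : Measurable pμ)
    (hpμL2 : ∀ i, MemLp (fun ω => pμ (X ω) i) 2 P)
    -- the regressor vector `Z = (1, A, p_μ(X)ᵀ)ᵀ` has positive definite Gram
    -- matrix `E[Z Zᵀ | S = 1]`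
    (Z : Ω → Fin (k₁ + 2) → ℝ)
    (hZ : ∀ ω, Z ω = Fin.cons 1 (Fin.cons (A ω) (pμ (X ω))))
    (hGram : (Matrix.of fun i j : Fin (k₁ + 2) =>
      ∫ ω, Z ω i * Z ω j ∂(P[|{ω | S ω = 1}])).PosDef)
    -- `β* = (β*_int, β*_A, β*_X)` is the unique minimizer of the squared loss
    -- `β ↦ E[(Y − μ̄(·;β))² | S = 1]`
    (βstar : ℝ × ℝ × (Fin k₁ → ℝ))
    (hmin : ∀ β : ℝ × ℝ × (Fin k₁ → ℝ),
      ∫ ω, (Y ω - (βstar.1 + βstar.2.1 * A ω + ∑ i, βstar.2.2 i * pμ (X ω) i)) ^ 2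
          ∂(P[|{ω | S ω = 1}])
        ≤ ∫ ω, (Y ω - (β.1 + β.2.1 * A ω + ∑ i, β.2.2 i * pμ (X ω) i)) ^ 2
          ∂(P[|{ω | S ω = 1}]))
    (huniq : ∀ β : ℝ × ℝ × (Fin k₁ → ℝ),
      ∫ ω, (Y ω - (β.1 + β.2.1 * A ω + ∑ i, β.2.2 i * pμ (X ω) i)) ^ 2
          ∂(P[|{ω | S ω = 1}])
        = ∫ ω, (Y ω - (βstar.1 + βstar.2.1 * A ω + ∑ i, βstar.2.2 i * pμ (X ω) i)) ^ 2
          ∂(P[|{ω | S ω = 1}]) → β = βstar)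
    -- the bias function `b₀`: σ(X)-measurable, square-integrable over the
    -- external controls, and equal (a.e. under `P(·|S=0)`) to
    -- `E_{P(·|S=0)}[Y | σ(X)] − (β*_int + β*_X ⬝ p_μ(X))`
    (b0 : Ω → ℝ)
    (hb0meas : Measurable[MeasurableSpace.comap X inferInstance] b0)
    (hb0L2 : MemLp b0 2 (P[|{ω | S ω = 0}]))
    (hb0 : b0 =ᵐ[P[|{ω | S ω = 0}]] fun ω =>
      ((P[|{ω | S ω = 0}])[Y | MeasurableSpace.comap X inferInstance]) ω
        - (βstar.1 + ∑ i, βstar.2.2 i * pμ (X ω) i)) :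
    -- conclusion: `β*` minimizes the combined-population squared loss of the
    -- augmented ANCOVA model
    ∀ β : ℝ × ℝ × (Fin k₁ → ℝ),
      ∫ ω, (Y ω - (β.1 + β.2.1 * A ω + ∑ i, β.2.2 i * pμ (X ω) i
          + (1 - S ω) * b0 ω)) ^ 2 ∂P
        ≥ ∫ ω, (Y ω - (βstar.1 + βstar.2.1 * A ω + ∑ i, βstar.2.2 i * pμ (X ω) i
          + (1 - S ω) * b0 ω)) ^ 2 ∂P := by
  intro β
  rw [ge_iff_le]
  set s1 : Set Ω := {ω | S ω = 1} with hs1def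
  set s0 : Set Ω := {ω | S ω = 0} with hs0def
  have hs1 : MeasurableSet s1 := hS (measurableSet_singleton 1)
  have hs0 : MeasurableSet s0 := hS (measurableSet_singleton 0)
  have hcompl : s1ᶜ = s0 := by
    ext ω
    simp only [Set.mem_compl_iff, Set.mem_setOf_eq, hs1def, hs0def]
    rcases hS01 ω with h | h <;> simp [h]
  have hP1ne : P s1 ≠ 0 := hS1pos.ne'
  have hP1top : P s1 ≠ ∞ := measure_ne_top _ _
  have hP0ne : P s0 ≠ 0 := by
    rw [← hcompl, measure_compl hs1 hP1top, measure_univ]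
    intro h
    exact hS1lt.not_ge (tsub_eq_zero_iff_le.mp h)
  have hP0top : P s0 ≠ ∞ := measure_ne_top _ _
  haveI hprob1 : IsProbabilityMeasure (P[|s1]) := cond_isProbabilityMeasure hP1ne
  haveI hprob0 : IsProbabilityMeasure (P[|s0]) := cond_isProbabilityMeasure hP0ne
  -- measurability of b0
  have hb0m : Measurable b0 := hb0meas.mono hX.comap_le le_rfl
  have hA1 : ∀ ω, |A ω| ≤ 1 := fun ω => by rcases hA01 ω with h | h <;> simp [h]
  -- Y is in L²
  have hYL2 : MemLp Y 2 P := by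
    have h1 : MemLp (fun ω => A ω * Y1 ω) 2 P := by
      refine hY1.of_le (hA.aestronglyMeasurable.mul hY1.aestronglyMeasurable) ?_
      filter_upwards with ω
      simp only [Real.norm_eq_abs, abs_mul]
      exact mul_le_of_le_one_left (abs_nonneg _) (hA1 ω)
    have h2 : MemLp (fun ω => (1 - A ω) * Y0 ω) 2 P := by
      refine hY0.of_le
        ((measurable_const.sub hA).aestronglyMeasurable.mul hY0.aestronglyMeasurable) ?_
      filter_upwards with ω
      simp only [Real.norm_eq_abs, abs_mul]
      refine mul_le_of_le_one_left (abs_nonneg _) ?_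
      rcases hA01 ω with h | h <;> simp [h]
    exact (h1.add h2).ae_eq (Filter.Eventually.of_forall fun ω => (hY ω).symm)
  -- the linear part is in L²
  have hlin : ∀ γ : ℝ × ℝ × (Fin k₁ → ℝ),
      MemLp (fun ω => γ.1 + γ.2.1 * A ω + ∑ i, γ.2.2 i * pμ (X ω) i) 2 P := by
    intro γ
    have hc : MemLp (fun _ : Ω => γ.1) 2 P := memLp_const _
    have hA2 : MemLp (fun ω => γ.2.1 * A ω) 2 P := by
      refine (memLp_const (μ := P) (p := 2) γ.2.1).of_le
        ((hA.const_mul _).aestronglyMeasurable) ?_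
      filter_upwards with ω
      simp only [Real.norm_eq_abs, abs_mul]
      exact mul_le_of_le_one_right (abs_nonneg _) (hA1 ω)
    have hsum : MemLp (fun ω => ∑ i, γ.2.2 i * pμ (X ω) i) 2 P :=
      memLp_finset_sum Finset.univ fun i _ => (hpμL2 i).const_mul (γ.2.2 i)
    exact (hc.add hA2).add hsum
  -- the bias augmentation term is in L²
  have hind : MemLp (fun ω => (1 - S ω) * b0 ω) 2 P := by
    have h1 : P.restrict s0 = (P s0) • (P[|s0]) := by
      show P.restrict s0 = (P s0) • ((P s0)⁻¹ • P.restrict s0)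
      rw [smul_smul, ENNReal.mul_inv_cancel hP0ne hP0top, one_smul]
    have h2 : MemLp b0 2 (P.restrict s0) := by
      rw [h1]; exact hb0L2.smul_measure hP0top
    have h3 : MemLp (s0.indicator b0) 2 P := (memLp_indicator_iff_restrict hs0).mpr h2
    refine h3.ae_eq (Filter.Eventually.of_forall fun ω => ?_)
    by_cases h : ω ∈ s0
    · have hSω : S ω = 0 := h
      simp [Set.indicator_of_mem h, hSω]
    · have hSω : S ω = 1 := (hS01 ω).resolve_left h
      simp [Set.indicator_of_notMem h, hSω]
  -- augmented residual in L², loss integrable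
  have huaug : ∀ γ : ℝ × ℝ × (Fin k₁ → ℝ),
      MemLp (fun ω => Y ω - (γ.1 + γ.2.1 * A ω + ∑ i, γ.2.2 i * pμ (X ω) i
        + (1 - S ω) * b0 ω)) 2 P := fun γ => hYL2.sub ((hlin γ).add hind)
  have hLint : ∀ γ : ℝ × ℝ × (Fin k₁ → ℝ),
      Integrable (fun ω => (Y ω - (γ.1 + γ.2.1 * A ω + ∑ i, γ.2.2 i * pμ (X ω) i
        + (1 - S ω) * b0 ω)) ^ 2) P := fun γ => (huaug γ).integrable_sq
  -- splitting of the integral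
  have hsplit : ∀ f : Ω → ℝ, Integrable f P →
      ∫ ω, f ω ∂P = (P s1).toReal * ∫ ω, f ω ∂(P[|s1])
        + (P s0).toReal * ∫ ω, f ω ∂(P[|s0]) := by
    intro f hf
    have e1 : ∫ ω, f ω ∂(P[|s1]) = ((P s1)⁻¹).toReal * ∫ ω in s1, f ω ∂P := by
      show ∫ ω, f ω ∂((P s1)⁻¹ • P.restrict s1) = _
      rw [integral_smul_measure]
      rfl
    have e0 : ∫ ω, f ω ∂(P[|s0]) = ((P s0)⁻¹).toReal * ∫ ω in s0, f ω ∂P := by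
      show ∫ ω, f ω ∂((P s0)⁻¹ • P.restrict s0) = _
      rw [integral_smul_measure]
      rfl
    rw [e1, e0, ENNReal.toReal_inv, ENNReal.toReal_inv, ← mul_assoc, ← mul_assoc,
      mul_inv_cancel₀ (ENNReal.toReal_ne_zero.mpr ⟨hP1ne, hP1top⟩),
      mul_inv_cancel₀ (ENNReal.toReal_ne_zero.mpr ⟨hP0ne, hP0top⟩), one_mul, one_mul,
      ← hcompl]
    exact (integral_add_compl hs1 hf).symm
  -- a.e. facts under the conditional measures
  have hae1 : ∀ᵐ ω ∂(P[|s1]), S ω = 1 := by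
    show ∀ᵐ ω ∂((P s1)⁻¹ • P.restrict s1), S ω = 1
    exact Measure.ae_smul_measure (ae_restrict_mem hs1) _
  have hae0S : ∀ᵐ ω ∂(P[|s0]), S ω = 0 := by
    show ∀ᵐ ω ∂((P s0)⁻¹ • P.restrict s0), S ω = 0
    exact Measure.ae_smul_measure (ae_restrict_mem hs0) _
  have hac0 : (P[|s0]) ≪ P := cond_absolutelyContinuous
  have hae0A : ∀ᵐ ω ∂(P[|s0]), A ω = 0 := by
    filter_upwards [hac0.ae_le hEC, hae0S] with ω h1 h2
    exact h1 h2
  -- transfer of L² membership to the conditional measure on S = 0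
  have hle0 : (P[|s0]) ≤ (P s0)⁻¹ • P := by
    refine Measure.le_iff.mpr fun t ht => ?_
    rw [cond_apply hs0]
    calc (P s0)⁻¹ * P (s0 ∩ t) ≤ (P s0)⁻¹ * P t :=
          mul_le_mul_right (measure_mono Set.inter_subset_right) _
    _ = ((P s0)⁻¹ • P) t := rfl
  have htrans0 : ∀ {f : Ω → ℝ}, MemLp f 2 P → MemLp f 2 (P[|s0]) := fun hf =>
    MemLp.mono_measure hle0 (hf.smul_measure (ENNReal.inv_ne_top.mpr hP0ne))
  -- the trial-part congruence
  have hcong1 : ∀ γ : ℝ × ℝ × (Fin k₁ → ℝ),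
      (fun ω => (Y ω - (γ.1 + γ.2.1 * A ω + ∑ i, γ.2.2 i * pμ (X ω) i
          + (1 - S ω) * b0 ω)) ^ 2)
        =ᵐ[P[|s1]] fun ω =>
          (Y ω - (γ.1 + γ.2.1 * A ω + ∑ i, γ.2.2 i * pμ (X ω) i)) ^ 2 := by
    intro γ
    filter_upwards [hae1] with ω h
    rw [h]
    ring
  -- the external-control-part congruence
  have hm : MeasurableSpace.comap X inferInstance ≤ ‹MeasurableSpace Ω› := hX.comap_le
  have hrepr : ∀ γ : ℝ × ℝ × (Fin k₁ → ℝ),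
      (fun ω => (Y ω - (γ.1 + γ.2.1 * A ω + ∑ i, γ.2.2 i * pμ (X ω) i
          + (1 - S ω) * b0 ω)) ^ 2)
        =ᵐ[P[|s0]] fun ω =>
          (Y ω - ((P[|s0])[Y|MeasurableSpace.comap X inferInstance]) ω
            + ((βstar.1 - γ.1) + ∑ i, (βstar.2.2 i - γ.2.2 i) * pμ (X ω) i)) ^ 2 := by
    intro γ
    filter_upwards [hae0S, hae0A, hb0] with ω h1 h2 h3
    rw [h1, h2, h3]
    simp only [sub_mul, Finset.sum_sub_distrib]
    ring
  -- strong measurability and L² membership of the shift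
  have hXm : Measurable[MeasurableSpace.comap X inferInstance] X := Measurable.of_comap_le le_rfl
  have hgm : StronglyMeasurable[MeasurableSpace.comap X inferInstance] (fun ω =>
      (βstar.1 - β.1) + ∑ i, (βstar.2.2 i - β.2.2 i) * pμ (X ω) i) := by
    have : Measurable[MeasurableSpace.comap X inferInstance] (fun ω =>
        (βstar.1 - β.1) + ∑ i, (βstar.2.2 i - β.2.2 i) * pμ (X ω) i) := by
      exact measurable_const.add (Finset.measurable_sum Finset.univ fun i _ =>
        (((measurable_pi_apply i).comp hpμ).comp hXm).const_mul _)
    exact this.stronglyMeasurable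
  have hgL2 : MemLp (fun ω =>
      (βstar.1 - β.1) + ∑ i, (βstar.2.2 i - β.2.2 i) * pμ (X ω) i) 2 (P[|s0]) := by
    have hsum : MemLp (fun ω => ∑ i, (βstar.2.2 i - β.2.2 i) * pμ (X ω) i) 2 (P[|s0]) :=
      memLp_finset_sum Finset.univ fun i _ => (htrans0 (hpμL2 i)).const_mul _
    exact (memLp_const (μ := P[|s0]) (p := 2) (βstar.1 - β.1)).add hsum
  -- residual square integrable under the conditional measure
  have hI1 : Integrable (fun ω => (Y ω - ((P[|s0])[Y|MeasurableSpace.comap X inferInstance]) ω) ^ 2) (P[|s0]) := by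
    have h := (htrans0 (huaug βstar)).integrable_sq
    refine (h.congr ((hrepr βstar).trans (Filter.Eventually.of_forall fun ω => ?_)))
    simp
  -- external-control part inequality
  have h0le : ∫ ω, (Y ω - (βstar.1 + βstar.2.1 * A ω + ∑ i, βstar.2.2 i * pμ (X ω) i
        + (1 - S ω) * b0 ω)) ^ 2 ∂(P[|s0])
      ≤ ∫ ω, (Y ω - (β.1 + β.2.1 * A ω + ∑ i, β.2.2 i * pμ (X ω) i
        + (1 - S ω) * b0 ω)) ^ 2 ∂(P[|s0]) := by
    rw [integral_congr_ae (hrepr βstar), integral_congr_ae (hrepr β)]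
    have e : (fun ω => (Y ω - ((P[|s0])[Y|MeasurableSpace.comap X inferInstance]) ω
        + ((βstar.1 - βstar.1) + ∑ i, (βstar.2.2 i - βstar.2.2 i) * pμ (X ω) i)) ^ 2)
        = fun ω => (Y ω - ((P[|s0])[Y|MeasurableSpace.comap X inferInstance]) ω) ^ 2 := by
      funext ω; simp
    rw [e]
    exact condexp_residual_sq_le hm (htrans0 hYL2) hgL2 hgm hI1
  -- trial part inequality
  have h1le : ∫ ω, (Y ω - (βstar.1 + βstar.2.1 * A ω + ∑ i, βstar.2.2 i * pμ (X ω) i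
        + (1 - S ω) * b0 ω)) ^ 2 ∂(P[|s1])
      ≤ ∫ ω, (Y ω - (β.1 + β.2.1 * A ω + ∑ i, β.2.2 i * pμ (X ω) i
        + (1 - S ω) * b0 ω)) ^ 2 ∂(P[|s1]) := by
    rw [integral_congr_ae (hcong1 βstar), integral_congr_ae (hcong1 β)]
    exact hmin β
  -- combine
  rw [hsplit _ (hLint βstar), hsplit _ (hLint β)]
  exact add_le_add
    (mul_le_mul_of_nonneg_left h1le ENNReal.toReal_nonneg)
    (mul_le_mul_of_nonneg_left h0le ENNReal.toReal_nonneg)
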